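/- (Theorem: hyperbolic Voronoi cells are restrictions of Euclidean power cells.) Let P be a finite set of points in the open unit ball 𝕂ⁿ of ℝⁿ, and for each p ∈ P let s_p = p/(2√(1 − ‖p‖²)) and w_p = ‖p‖²/(4(1 − ‖p‖²)) − 1/√(1 − ‖p‖²). Then for every p ∈ P, the hyperbolic Voronoi cell V(p) = {x ∈ 𝕂ⁿ : ∀ q ∈ P, d_K(x,q) ≥ d_K(x,p)} equals the restriction to 𝕂ⁿ of the Euclidean power cell, i.e. V(p) = {x ∈ 𝕂ⁿ : ∀ q ∈ P, ‖x − s_q‖² − w_q ≥ ‖x − s_p‖² − w_p}. -/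

import Mathlib

open RealInnerProductSpace

/-- Real inverse hyperbolic cosine, defined on `[1, ∞)`. -/
noncomputable def arcosh (x : ℝ) : ℝ := Real.log (x + Real.sqrt (x ^ 2 - 1))

/-- The argument of `arcosh` in the Klein–Beltrami distance. -/
noncomputable def kleinArg {n : ℕ} (x y : EuclideanSpace ℝ (Fin n)) : ℝ :=
  (1 - ⟪x, y⟫) / Real.sqrt ((1 - ‖x‖ ^ 2) * (1 - ‖y‖ ^ 2))

/-- The Klein–Beltrami distance on the open unit ball. -/
noncomputable def dK {n : ℕ} (x y : EuclideanSpace ℝ (Fin n)) : ℝ := arcosh (kleinArg x y)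

/-- Lifted center `s_p = p / (2 √(1 - ‖p‖²))`. -/
noncomputable def liftedCenter {n : ℕ} (p : EuclideanSpace ℝ (Fin n)) :
    EuclideanSpace ℝ (Fin n) :=
  (1 / (2 * Real.sqrt (1 - ‖p‖ ^ 2))) • p

/-- Lifted weight `w_p = ‖p‖² / (4 (1 - ‖p‖²)) - 1 / √(1 - ‖p‖²)`. -/
noncomputable def liftedWeight {n : ℕ} (p : EuclideanSpace ℝ (Fin n)) : ℝ :=
  ‖p‖ ^ 2 / (4 * (1 - ‖p‖ ^ 2)) - 1 / Real.sqrt (1 - ‖p‖ ^ 2)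

/-- Euclidean power distance of `x` to a center `s` with weight `w`. -/
noncomputable def powerDist {n : ℕ} (x s : EuclideanSpace ℝ (Fin n)) (w : ℝ) : ℝ :=
  ‖x - s‖ ^ 2 - w

lemma arcosh_le_arcosh_iff {a b : ℝ} (ha : 1 ≤ a) (hb : 1 ≤ b) :
    arcosh a ≤ arcosh b ↔ a ≤ b := by
  unfold arcosh
  rw [Real.log_le_log_iff (by nlinarith [Real.sqrt_nonneg (a ^ 2 - 1)])
    (by nlinarith [Real.sqrt_nonneg (b ^ 2 - 1)])]
  constructor
  · intro h
    by_contra h'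
    push_neg at h'
    have hs : Real.sqrt (b ^ 2 - 1) ≤ Real.sqrt (a ^ 2 - 1) :=
      Real.sqrt_le_sqrt (by nlinarith)
    linarith
  · intro h
    have hs : Real.sqrt (a ^ 2 - 1) ≤ Real.sqrt (b ^ 2 - 1) :=
      Real.sqrt_le_sqrt (by nlinarith)
    linarith

lemma one_le_kleinArg {n : ℕ} {x q : EuclideanSpace ℝ (Fin n)}
    (hx : ‖x‖ < 1) (hq : ‖q‖ < 1) : 1 ≤ kleinArg x q := by
  have hip : ⟪x, q⟫ ≤ ‖x‖ * ‖q‖ := real_inner_le_norm x q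
  have hxq : ‖x‖ * ‖q‖ < 1 := by nlinarith [norm_nonneg x, norm_nonneg q]
  have hprod : (0:ℝ) < (1 - ‖x‖ ^ 2) * (1 - ‖q‖ ^ 2) :=
    mul_pos (by nlinarith [norm_nonneg x]) (by nlinarith [norm_nonneg q])
  have h1 : (0:ℝ) ≤ ‖x‖ * ‖q‖ - ⟪x, q⟫ := by linarith
  have h2 : (0:ℝ) ≤ 2 - ⟪x, q⟫ - ‖x‖ * ‖q‖ := by linarith
  have hs : Real.sqrt ((1 - ‖x‖ ^ 2) * (1 - ‖q‖ ^ 2)) ≤ 1 - ⟪x, q⟫ := by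
    rw [show (1:ℝ) - ⟪x, q⟫ = Real.sqrt ((1 - ⟪x, q⟫) ^ 2) from
      (Real.sqrt_sq (by linarith)).symm]
    exact Real.sqrt_le_sqrt (by nlinarith [mul_nonneg h1 h2, sq_nonneg (‖x‖ - ‖q‖)])
  rw [kleinArg, le_div_iff₀ (Real.sqrt_pos.mpr hprod)]
  linarith

lemma powerDist_eq {n : ℕ} {x q : EuclideanSpace ℝ (Fin n)}
    (hx : ‖x‖ < 1) (hq : ‖q‖ < 1) :
    powerDist x (liftedCenter q) (liftedWeight q)
      = ‖x‖ ^ 2 + Real.sqrt (1 - ‖x‖ ^ 2) * kleinArg x q := by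
  have hq2 : (0:ℝ) < 1 - ‖q‖ ^ 2 := by nlinarith [norm_nonneg q]
  have hx2 : (0:ℝ) < 1 - ‖x‖ ^ 2 := by nlinarith [norm_nonneg x]
  set s := Real.sqrt (1 - ‖q‖ ^ 2) with hs
  set t := Real.sqrt (1 - ‖x‖ ^ 2) with ht
  have hspos : 0 < s := Real.sqrt_pos.mpr hq2
  have htpos : 0 < t := Real.sqrt_pos.mpr hx2
  have hssq : s ^ 2 = 1 - ‖q‖ ^ 2 := Real.sq_sqrt hq2.le
  have htsq : t ^ 2 = 1 - ‖x‖ ^ 2 := Real.sq_sqrt hx2.le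
  have hmul : Real.sqrt ((1 - ‖x‖ ^ 2) * (1 - ‖q‖ ^ 2)) = t * s := by
    rw [Real.sqrt_mul hx2.le]
  have hexp : ‖x - liftedCenter q‖ ^ 2
      = ‖x‖ ^ 2 - 2 * ((1 / (2 * s)) * ⟪x, q⟫) + (1 / (2 * s)) ^ 2 * ‖q‖ ^ 2 := by
    rw [norm_sub_sq_real, liftedCenter, real_inner_smul_right, norm_smul,
      Real.norm_eq_abs, abs_of_pos (show (0:ℝ) < 1 / (2 * s) by positivity)]
    ring
  rw [powerDist, hexp, liftedWeight, kleinArg, hmul]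
  rw [show (1:ℝ) - ‖q‖ ^ 2 = s ^ 2 from hssq.symm]
  rw [Real.sqrt_sq hspos.le]
  field_simp
  ring

lemma dK_le_iff {n : ℕ} {x p q : EuclideanSpace ℝ (Fin n)}
    (hx : ‖x‖ < 1) (hp : ‖p‖ < 1) (hq : ‖q‖ < 1) :
    dK x p ≤ dK x q ↔
      powerDist x (liftedCenter p) (liftedWeight p)
        ≤ powerDist x (liftedCenter q) (liftedWeight q) := by
  have hx2 : (0:ℝ) < 1 - ‖x‖ ^ 2 := by nlinarith [norm_nonneg x]
  have htpos : 0 < Real.sqrt (1 - ‖x‖ ^ 2) := Real.sqrt_pos.mpr hx2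
  rw [dK, dK, arcosh_le_arcosh_iff (one_le_kleinArg hx hp) (one_le_kleinArg hx hq),
    powerDist_eq hx hp, powerDist_eq hx hq, add_le_add_iff_left,
    mul_le_mul_iff_right₀ htpos]

theorem hyperbolic_voronoi_eq_power_cell {n : ℕ} (P : Finset (EuclideanSpace ℝ (Fin n)))
    (hP : ∀ p ∈ P, ‖p‖ < 1) (p : EuclideanSpace ℝ (Fin n)) (hp : p ∈ P) :
    {x : EuclideanSpace ℝ (Fin n) | ‖x‖ < 1 ∧ ∀ q ∈ P, dK x p ≤ dK x q}
      = {x : EuclideanSpace ℝ (Fin n) | ‖x‖ < 1 ∧ ∀ q ∈ P,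
          powerDist x (liftedCenter p) (liftedWeight p)
            ≤ powerDist x (liftedCenter q) (liftedWeight q)} := by
  ext x
  simp only [Set.mem_setOf_eq]
  constructor
  · rintro ⟨hx, h⟩
    exact ⟨hx, fun q hq => (dK_le_iff hx (hP p hp) (hP q hq)).mp (h q hq)⟩
  · rintro ⟨hx, h⟩
    exact ⟨hx, fun q hq => (dK_le_iff hx (hP p hp) (hP q hq)).mpr (h q hq)⟩
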